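/- arXiv:1410.0915 — 3 statements merged into one kernel-verified Lean document; each statement's English description precedes it below -/
import Mathlib

section
/- Let p < 1 with p ≠ 0, U(x) = x^p/p for x > 0, and V(y) = ((1−p)/p) y^{p/(p−1)} for y > 0. Let m ∈ ℝ, z > m, and y > 0. Then: (i) if y < (z−m)^{p−1}, the supremum of U(x+z) − x·y over x ∈ (−m, ∞) equals V(y) + y·z and is attained at x = y^{1/(p−1)} − z; (ii) if y ≥ (z−m)^{p−1}, the supremum of U(x+z) − x·y over x ∈ (−m, ∞) equals (z−m)^p/p + y·m. -/
open Real Set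

/-- Bernoulli inequality for negative exponents. -/
lemma bernoulli_neg {u p : ℝ} (hu : 0 < u) (hp : p < 0) :
    1 + p * (u - 1) ≤ u ^ p := by
  have hlog : Real.log u ≤ u - 1 := Real.log_le_sub_one_of_pos hu
  have h1 : 1 + p * (u - 1) ≤ 1 + p * Real.log u := by nlinarith
  have h2 : 1 + p * Real.log u ≤ Real.exp (p * Real.log u) := by
    linarith [Real.add_one_le_exp (p * Real.log u)]
  calc 1 + p * (u - 1) ≤ Real.exp (p * Real.log u) := le_trans h1 h2
    _ = u ^ p := by rw [Real.rpow_def_of_pos hu, mul_comm]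

/-- Key concavity inequality for power functions. -/
lemma key_ineq {p a b : ℝ} (hp : p < 1) (hp0 : p ≠ 0) (ha : 0 < a) (hb : 0 < b) :
    a ^ p / p - b ^ p / p ≤ b ^ (p - 1) * (a - b) := by
  set u := a / b with hu
  have hu0 : 0 < u := div_pos ha hb
  have hab : a = u * b := by rw [hu, div_mul_cancel₀ a hb.ne']
  have hbp : (0:ℝ) < b ^ p := Real.rpow_pos_of_pos hb p
  have hap : a ^ p = u ^ p * b ^ p := by
    rw [hab, Real.mul_rpow hu0.le hb.le]
  have hbp1 : b ^ (p - 1) = b ^ p / b := by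
    rw [Real.rpow_sub hb, Real.rpow_one]
  have hrhs : b ^ (p - 1) * (a - b) = b ^ p * (u - 1) := by
    rw [hbp1, hab]; field_simp
  rw [hap, hrhs]
  rcases lt_or_gt_of_ne hp0 with hneg | hpos
  · -- p < 0 : u^p ≥ 1 + p(u-1)
    have h1 : p * (u - 1) ≤ u ^ p - 1 := by
      linarith [bernoulli_neg hu0 hneg]
    rw [div_sub_div_same, div_le_iff_of_neg hneg]
    calc b ^ p * (u - 1) * p = b ^ p * (p * (u - 1)) := by ring
      _ ≤ b ^ p * (u ^ p - 1) := by
          exact mul_le_mul_of_nonneg_left h1 hbp.le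
      _ = u ^ p * b ^ p - b ^ p := by ring
  · -- 0 < p < 1 : u^p ≤ 1 + p(u-1)
    have h1 : u ^ p ≤ 1 + p * (u - 1) := by
      have := rpow_one_add_le_one_add_mul_self (s := u - 1) (by linarith) hpos.le hp.le
      simpa using this
    rw [div_sub_div_same, div_le_iff₀ hpos]
    calc u ^ p * b ^ p - b ^ p = b ^ p * (u ^ p - 1) := by ring
      _ ≤ b ^ p * (p * (u - 1)) := by
          exact mul_le_mul_of_nonneg_left (by linarith) hbp.le
      _ = b ^ p * (u - 1) * p := by ring

/-- Constrained conjugate of power utility. For `p < 1`, `p ≠ 0`, `U(x) = x^p/p`,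
`V(y) = ((1-p)/p) y^(p/(p-1))`, `m ∈ ℝ`, `z > m`, `y > 0`:
(i) if `y < (z-m)^(p-1)` then `sup_{x > -m} (U(x+z) - x y) = V(y) + y z`,
attained at `x = y^(1/(p-1)) - z`;
(ii) if `y ≥ (z-m)^(p-1)` then `sup_{x > -m} (U(x+z) - x y) = (z-m)^p/p + y m`. -/
theorem power_utility_constrained_conjugate (p m z y : ℝ)
    (hp : p < 1) (hp0 : p ≠ 0) (hz : m < z) (hy : 0 < y) :
    (y < (z - m) ^ (p - 1) →
      IsGreatest ((fun x : ℝ => (x + z) ^ p / p - x * y) '' Set.Ioi (-m))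
        ((1 - p) / p * y ^ (p / (p - 1)) + y * z) ∧
      y ^ (1 / (p - 1)) - z ∈ Set.Ioi (-m) ∧
      ((y ^ (1 / (p - 1)) - z) + z) ^ p / p - (y ^ (1 / (p - 1)) - z) * y
        = (1 - p) / p * y ^ (p / (p - 1)) + y * z) ∧
    ((z - m) ^ (p - 1) ≤ y →
      IsLUB ((fun x : ℝ => (x + z) ^ p / p - x * y) '' Set.Ioi (-m))
        ((z - m) ^ p / p + y * m)) := by
  have hp1 : p - 1 < 0 := by linarith
  have hp1' : p - 1 ≠ 0 := ne_of_lt hp1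
  have hb : (0:ℝ) < z - m := by linarith
  set t : ℝ := y ^ (1 / (p - 1)) with ht
  have htpos : 0 < t := Real.rpow_pos_of_pos hy _
  have htpm1 : t ^ (p - 1) = y := by
    rw [ht, ← Real.rpow_mul hy.le]
    rw [show 1 / (p - 1) * (p - 1) = 1 by field_simp]
    exact Real.rpow_one y
  have htp : t ^ p = y ^ (p / (p - 1)) := by
    rw [ht, ← Real.rpow_mul hy.le]
    congr 1; field_simp
  have hty : t * y = y ^ (p / (p - 1)) := by
    rw [ht]
    nth_rewrite 2 [show y = y ^ (1:ℝ) from (Real.rpow_one y).symm]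
    rw [← Real.rpow_add hy]
    congr 1; field_simp; ring
  constructor
  · -- Part (i)
    intro hlt
    have hmem : t - z ∈ Set.Ioi (-m) := by
      have h1 : ((z - m) ^ (p - 1)) ^ (1 / (p - 1)) < y ^ (1 / (p - 1)) := by
        exact Real.rpow_lt_rpow_of_neg hy hlt (div_neg_of_pos_of_neg one_pos hp1)
      have h2 : ((z - m) ^ (p - 1)) ^ (1 / (p - 1)) = z - m := by
        rw [← Real.rpow_mul hb.le]
        rw [show (p - 1) * (1 / (p - 1)) = 1 by field_simp]
        exact Real.rpow_one _
      rw [h2] at h1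
      simp only [Set.mem_Ioi]
      linarith
    have hval : ((t - z) + z) ^ p / p - (t - z) * y
        = (1 - p) / p * y ^ (p / (p - 1)) + y * z := by
      rw [show (t - z) + z = t by ring]
      rw [htp]
      have : (t - z) * y = t * y - z * y := by ring
      rw [this, hty]
      field_simp
      ring
    refine ⟨⟨⟨t - z, hmem, hval⟩, ?_⟩, hmem, hval⟩
    rintro v ⟨x, hx, rfl⟩
    simp only [Set.mem_Ioi] at hx
    have hxz : 0 < x + z := by linarith
    have hk := key_ineq hp hp0 hxz htpos
    rw [htpm1] at hk
    -- (x+z)^p/p - t^p/p ≤ y * (x + z - t)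
    rw [← hval]
    rw [show (t - z) + z = t by ring]
    nlinarith [hk]
  · -- Part (ii)
    intro hge
    constructor
    · rintro v ⟨x, hx, rfl⟩
      simp only [Set.mem_Ioi] at hx
      have hxz : 0 < x + z := by linarith
      have hk := key_ineq hp hp0 hxz hb
      have hge' : (z - m) ^ (p - 1) * (x + z - (z - m)) ≤ y * (x + z - (z - m)) := by
        apply mul_le_mul_of_nonneg_right hge
        linarith
      simp only
      nlinarith
    · intro c hc
      have hF : ContinuousAt (fun x : ℝ => (x + z) ^ p / p - x * y) (-m) := by
        have h2 : ContinuousAt (fun x : ℝ => (x + z) ^ p) (-m) := by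
          apply ContinuousAt.rpow_const (continuousAt_id.add continuousAt_const)
          exact Or.inl (by show -m + z ≠ 0; intro h; absurd h; linarith)
        exact (h2.div_const p).sub (continuousAt_id.mul continuousAt_const)
      have htend : Filter.Tendsto (fun x : ℝ => (x + z) ^ p / p - x * y)
          (nhdsWithin (-m) (Set.Ioi (-m))) (nhds ((z - m) ^ p / p + y * m)) := by
        have : (-m + z) ^ p / p - (-m) * y = (z - m) ^ p / p + y * m := by
          rw [show -m + z = z - m by ring]; ring
        rw [← this]
        exact hF.continuousWithinAt.tendsto
      refine le_of_tendsto htend ?_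
      filter_upwards [self_mem_nhdsWithin] with x hx
      exact hc ⟨x, hx, rfl⟩
end

section
/- Let (E, 𝒜, μ) be a finite measure space, d ≥ 1, and let ν, σ, σ_n : E → ℝ^d (n ∈ ℕ) be measurable with ∫ |ν|² dμ < ∞. Assume that σ_n → σ in μ-measure as n → ∞, that the inner product ⟨ν(e), σ(e)⟩ = 0 for μ-almost every e, and that σ(e) ≠ 0 for μ-almost every e. Then ∫ (⟨ν, σ_n⟩² / |σ_n|²) · 1_{{σ_n ≠ 0}} dμ → 0 as n → ∞. -/
open scoped Classical

open MeasureTheory Filter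

/-- Analytic core of the Kunita–Watanabe approximation lemma: if `σₙ → σ` in
`μ`-measure, `⟨ν, σ⟩ = 0` a.e., `σ ≠ 0` a.e., and `‖ν‖²` is integrable over a
finite measure space, then `∫ ⟨ν, σₙ⟩²/‖σₙ‖² · 1_{σₙ ≠ 0} dμ → 0`. -/
theorem kunita_watanabe_projection_vanishes
    {E : Type*} [MeasurableSpace E] (μ : Measure E) [IsFiniteMeasure μ]
    (d : ℕ) (hd : 1 ≤ d)
    (ν : E → EuclideanSpace ℝ (Fin d)) (σ : E → EuclideanSpace ℝ (Fin d))
    (σn : ℕ → E → EuclideanSpace ℝ (Fin d))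
    (hν : Measurable ν) (hσ : Measurable σ) (hσn : ∀ n, Measurable (σn n))
    (hνint : Integrable (fun e => ‖ν e‖ ^ 2) μ)
    (hconv : TendstoInMeasure μ σn atTop σ)
    (horth : ∀ᵐ e ∂μ, (inner ℝ (ν e) (σ e) : ℝ) = 0)
    (hnondeg : ∀ᵐ e ∂μ, σ e ≠ 0) :
    Tendsto
      (fun n => ∫ e,
        (if σn n e ≠ 0 then (inner ℝ (ν e) (σn n e) : ℝ) ^ 2 / ‖σn n e‖ ^ 2 else 0) ∂μ)
      atTop (nhds 0) := by
  set f : ℕ → E → ℝ := fun n e =>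
    (if σn n e ≠ 0 then (inner ℝ (ν e) (σn n e) : ℝ) ^ 2 / ‖σn n e‖ ^ 2 else 0) with hf
  have hmeas : ∀ n, Measurable (f n) := by
    intro n
    refine Measurable.ite ?_ ?_ measurable_const
    · exact (measurableSet_eq_fun (hσn n) measurable_const).compl
    · exact (((hν.inner (hσn n)).pow_const 2)).div (((hσn n).norm).pow_const 2)
  have hbound : ∀ n, ∀ᵐ e ∂μ, ‖f n e‖ ≤ ‖ν e‖ ^ 2 := by
    intro n
    refine ae_of_all _ fun e => ?_
    simp only [hf]
    by_cases h : σn n e ≠ 0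
    · rw [if_pos h]
      have hpos : (0:ℝ) < ‖σn n e‖ ^ 2 := pow_pos (norm_pos_iff.mpr h) 2
      rw [Real.norm_eq_abs, abs_div, abs_of_nonneg (sq_nonneg _),
        abs_of_pos hpos, div_le_iff₀ hpos]
      have := abs_real_inner_le_norm (ν e) (σn n e)
      calc (inner ℝ (ν e) (σn n e) : ℝ) ^ 2 = |(inner ℝ (ν e) (σn n e) : ℝ)| ^ 2 := (sq_abs _).symm
        _ ≤ (‖ν e‖ * ‖σn n e‖) ^ 2 := by
            exact pow_le_pow_left₀ (abs_nonneg _) this 2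
        _ = ‖ν e‖ ^ 2 * ‖σn n e‖ ^ 2 := by ring
    · rw [if_neg h]; simp [sq_nonneg]
  refine tendsto_of_subseq_tendsto fun ns hns => ?_
  have hconv' : TendstoInMeasure μ (fun k => σn (ns k)) atTop σ :=
    fun ε hε => (hconv ε hε).comp hns
  obtain ⟨ms, hms, hae⟩ := hconv'.exists_seq_tendsto_ae
  refine ⟨ms, ?_⟩
  have hlim : ∀ᵐ e ∂μ, Tendsto (fun k => f (ns (ms k)) e) atTop (nhds 0) := by
    filter_upwards [hae, horth, hnondeg] with e he horthe hnde
    have hnorm : Tendsto (fun k => ‖σn (ns (ms k)) e‖) atTop (nhds ‖σ e‖) :=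
      he.norm
    have hσpos : (0:ℝ) < ‖σ e‖ := by
      simpa [norm_pos_iff] using hnde
    have hev : ∀ᶠ k in atTop, σn (ns (ms k)) e ≠ 0 := by
      filter_upwards [hnorm.eventually (eventually_gt_nhds (show ‖σ e‖ / 2 < ‖σ e‖ by linarith))]
        with k hk
      intro h0
      rw [h0, norm_zero] at hk
      linarith
    have hinner : Tendsto (fun k => (inner ℝ (ν e) (σn (ns (ms k)) e) : ℝ))
        atTop (nhds (inner ℝ (ν e) (σ e) : ℝ)) :=
      Tendsto.inner tendsto_const_nhds he
    have hdiv : Tendsto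
        (fun k => (inner ℝ (ν e) (σn (ns (ms k)) e) : ℝ) ^ 2 / ‖σn (ns (ms k)) e‖ ^ 2)
        atTop (nhds ((inner ℝ (ν e) (σ e) : ℝ) ^ 2 / ‖σ e‖ ^ 2)) := by
      exact Tendsto.div (hinner.pow 2) (hnorm.pow 2) (by positivity)
    have : ((inner ℝ (ν e) (σ e) : ℝ) ^ 2 / ‖σ e‖ ^ 2) = 0 := by
      rw [horthe]; simp
    rw [this] at hdiv
    refine hdiv.congr' ?_
    filter_upwards [hev] with k hk
    simp only [hf, if_pos hk]
  have := tendsto_integral_of_dominated_convergence (fun e => ‖ν e‖ ^ 2)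
    (fun k => (hmeas (ns (ms k))).aestronglyMeasurable) hνint
    (fun k => hbound (ns (ms k))) hlim
  simpa only [integral_zero] using this
end

section
/- Let (Ω, F, P) be a probability space with a filtration (ℱ_n)_{n∈ℕ}, let M = (M_n)_{n∈ℕ} be a martingale with respect to (ℱ_n) with M_n ≥ 0 almost surely for every n, and fix N ∈ ℕ. Suppose the function ω ↦ M_N(ω)·log(M_N(ω)) (with the convention 0·log 0 = 0) is integrable. Then c·(log c)·P( max_{0 ≤ n ≤ N} M_n ≥ c ) → 0 as the real parameter c → ∞. -/
open MeasureTheory Filter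

/-- `L log L` tail estimate for the running maximum of a nonnegative
martingale: if `M_N log M_N` is integrable, then
`c log c · P(max_{0 ≤ n ≤ N} M_n ≥ c) → 0` as `c → ∞`. -/
theorem LlogL_tail_running_max
    {Ω : Type*} [m : MeasurableSpace Ω] {P : Measure Ω} [IsProbabilityMeasure P]
    (ℱ : Filtration ℕ m) (M : ℕ → Ω → ℝ)
    (hM : Martingale M ℱ P)
    (hMnonneg : ∀ n, ∀ᵐ ω ∂P, 0 ≤ M n ω)
    (N : ℕ)
    (hint : Integrable (fun ω => M N ω * Real.log (M N ω)) P) :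
    Tendsto
      (fun c : ℝ =>
        c * Real.log c * (P {ω | c ≤ ⨆ n : Fin (N + 1), M n ω}).toReal)
      atTop (nhds 0) := by
  classical
  set f : ℕ → Ω → ℝ := fun n ω => M n ω ⊔ 0 with hfdef
  have hsub : Submartingale f ℱ P := hM.submartingale.pos
  have hfnn : ∀ n ω, 0 ≤ f n ω := fun n ω => le_sup_right
  have hfae : ∀ n, M n =ᵐ[P] f n := fun n =>
    (hMnonneg n).mono fun ω hω => (sup_eq_left.2 hω).symm
  have hfint : ∀ n, Integrable (f n) P := fun n => hsub.integrable n
  set S : ℝ → Set Ω := fun c =>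
    {ω | c ≤ (Finset.range (N + 1)).sup' Finset.nonempty_range_add_one fun k => f k ω} with hSdef
  -- measure rewriting
  have hPeq : ∀ c : ℝ, P {ω | c ≤ ⨆ n : Fin (N + 1), M n ω} = P (S c) := by
    intro c
    apply measure_congr
    have h1 : ∀ᵐ ω ∂P, ∀ n, M n ω = f n ω := ae_all_iff.2 hfae
    filter_upwards [h1] with ω hω
    have hsup : (⨆ n : Fin (N + 1), M n ω)
        = (Finset.range (N + 1)).sup' Finset.nonempty_range_add_one fun k => f k ω := by
      apply le_antisymm
      · refine ciSup_le fun i => ?_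
        rw [hω i]
        exact Finset.le_sup' (fun k => f k ω) (Finset.mem_range.2 i.isLt)
      · refine Finset.sup'_le _ _ fun k hk => ?_
        rw [← hω k]
        exact le_ciSup (f := fun n : Fin (N + 1) => M n ω)
          (Set.Finite.bddAbove (Set.finite_range _))
          (⟨k, Finset.mem_range.1 hk⟩ : Fin (N + 1))
    show (c ≤ ⨆ n : Fin (N + 1), M n ω) = _
    rw [hsup]; rfl
  have hmeasS : ∀ c, MeasurableSet (S c) := fun c =>
    measurableSet_le measurable_const (Finset.measurable_range_sup'' fun k _ =>
      (hsub.stronglyMeasurable k).measurable.le (ℱ.le k))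
  set K : ℝ := ∫ ω, f N ω ∂P with hK
  have hKnn : 0 ≤ K := integral_nonneg fun ω => hfnn N ω
  -- Doob's maximal inequality, real form
  have hdoob : ∀ c : ℝ, 0 ≤ c → c * (P (S c)).toReal ≤ ∫ ω in S c, f N ω ∂P := by
    intro c hc
    have h := maximal_ineq hsub (fun n ω => hfnn n ω) (ε := c.toNNReal) N
    rw [Real.coe_toNNReal c hc] at h
    have hInn : 0 ≤ ∫ ω in S c, f N ω ∂P :=
      setIntegral_nonneg (hmeasS c) fun ω _ => hfnn N ω
    have h2 := ENNReal.toReal_mono (by simp) h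
    rw [ENNReal.toReal_mul, ENNReal.toReal_ofReal hInn] at h2
    rwa [ENNReal.coe_toReal, Real.coe_toNNReal c hc] at h2
  -- The bad set where `f N` is large
  set B : ℝ → Set Ω := fun c => {ω | Real.sqrt c ≤ f N ω} with hBdef
  have hmeasB : ∀ c, MeasurableSet (B c) :=
    fun c => measurableSet_le measurable_const
      ((hsub.stronglyMeasurable N).measurable.le (ℱ.le N))
  have hsqrtTop : Tendsto Real.sqrt atTop atTop := by
    have h := tendsto_rpow_atTop (y := (1 / 2 : ℝ)) (by norm_num)
    refine h.congr fun x => ?_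
    rw [Real.sqrt_eq_rpow]
  have hPB : Tendsto (fun c => P (B c)) atTop (nhds 0) := by
    have h1 : Tendsto (fun c : ℝ => ENNReal.ofReal (K / Real.sqrt c)) atTop (nhds 0) := by
      rw [← ENNReal.ofReal_zero]
      exact ENNReal.tendsto_ofReal (Tendsto.div_atTop tendsto_const_nhds hsqrtTop)
    refine tendsto_of_tendsto_of_tendsto_of_le_of_le' tendsto_const_nhds h1
      (Eventually.of_forall fun c => zero_le) ?_
    filter_upwards [eventually_gt_atTop (0 : ℝ)] with c hc
    have hs : 0 < Real.sqrt c := Real.sqrt_pos.2 hc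
    have hm := mul_meas_ge_le_integral_of_nonneg
      (Eventually.of_forall (hfnn N)) (hfint N) (Real.sqrt c)
    rw [ENNReal.le_ofReal_iff_toReal_le (measure_ne_top _ _) (div_nonneg hKnn hs.le)]
    rw [le_div_iff₀ hs]
    rw [measureReal_def] at hm
    linarith [hm]
  set g : Ω → ℝ := fun ω => f N ω * Real.log (f N ω) with hgdef
  have hgint : Integrable g P := by
    refine hint.congr ((hMnonneg N).mono fun ω hω => ?_)
    have hfe : f N ω = M N ω := sup_eq_left.2 hω
    simp [hgdef, hfe]
  have hItend : Tendsto (fun c => ∫ ω in B c, g ω ∂P) atTop (nhds 0) :=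
    hgint.tendsto_setIntegral_nhds_zero hPB
  have hlogdiv : Tendsto (fun c : ℝ => Real.log c / Real.sqrt c) atTop (nhds 0) := by
    have h := (isLittleO_log_rpow_atTop (by norm_num : (0:ℝ) < 1/2)).tendsto_div_nhds_zero
    refine h.congr fun x => ?_
    rw [Real.sqrt_eq_rpow]
  have hU : Tendsto
      (fun c : ℝ => Real.log c / Real.sqrt c * K + 2 * ∫ ω in B c, g ω ∂P)
      atTop (nhds 0) := by
    have := (hlogdiv.mul_const K).add (hItend.const_mul 2)
    simpa using this
  refine tendsto_of_tendsto_of_tendsto_of_le_of_le' tendsto_const_nhds hU ?_ ?_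
  · filter_upwards [eventually_ge_atTop (1 : ℝ)] with c hc
    exact mul_nonneg (mul_nonneg (by linarith) (Real.log_nonneg hc)) ENNReal.toReal_nonneg
  · filter_upwards [eventually_ge_atTop (2 : ℝ)] with c hc
    have hc0 : (0:ℝ) < c := by linarith
    have hc1 : (1:ℝ) < c := by linarith
    have hcs : Real.sqrt c * Real.sqrt c = c := Real.mul_self_sqrt hc0.le
    have hs1 : 1 < Real.sqrt c := by nlinarith [Real.sqrt_nonneg c]
    have hs0 : 0 < Real.sqrt c := by linarith
    have hlogc : 0 ≤ Real.log c := Real.log_nonneg hc1.le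
    rw [hPeq c]
    set p : ℝ := (P (S c)).toReal with hp
    have hpnn : 0 ≤ p := ENNReal.toReal_nonneg
    have h1 : c * p ≤ ∫ ω in S c, f N ω ∂P := hdoob c hc0.le
    have h2 : ∫ ω in S c, f N ω ∂P ≤ K :=
      setIntegral_le_integral (hfint N) (Eventually.of_forall (hfnn N))
    have hsplit : (∫ ω in S c ∩ B c, f N ω ∂P) + ∫ ω in S c \ B c, f N ω ∂P
        = ∫ ω in S c, f N ω ∂P :=
      integral_inter_add_diff (hmeasB c) ((hfint N).integrableOn)
    -- small part
    have h3 : ∫ ω in S c \ B c, f N ω ∂P ≤ Real.sqrt c * p := by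
      have h3a : ∫ ω in S c \ B c, f N ω ∂P ≤ ∫ _ω in S c \ B c, Real.sqrt c ∂P := by
        refine setIntegral_mono_on ((hfint N).integrableOn)
          integrableOn_const
          ((hmeasS c).diff (hmeasB c)) fun ω hω => ?_
        exact le_of_lt (not_le.1 hω.2)
      have h3b : ∫ _ω in S c \ B c, Real.sqrt c ∂P
          = (P (S c \ B c)).toReal * Real.sqrt c := by
        rw [setIntegral_const]; rfl
      have h3c : (P (S c \ B c)).toReal ≤ p :=
        ENNReal.toReal_mono (measure_ne_top _ _) (measure_mono Set.diff_subset)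
      calc ∫ ω in S c \ B c, f N ω ∂P ≤ (P (S c \ B c)).toReal * Real.sqrt c := by
            rw [← h3b]; exact h3a
        _ ≤ p * Real.sqrt c := mul_le_mul_of_nonneg_right h3c hs0.le
        _ = Real.sqrt c * p := mul_comm _ _
    -- big part
    have h4 : Real.log c * ∫ ω in S c ∩ B c, f N ω ∂P ≤ 2 * ∫ ω in B c, g ω ∂P := by
      have h4a : ∫ ω in S c ∩ B c, Real.log c * f N ω ∂P
          ≤ ∫ ω in S c ∩ B c, 2 * g ω ∂P := by
        refine setIntegral_mono_on (((hfint N).const_mul _).integrableOn)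
          ((hgint.const_mul 2).integrableOn) ((hmeasS c).inter (hmeasB c)) fun ω hω => ?_
        have hωB : Real.sqrt c ≤ f N ω := hω.2
        have hlog2 : Real.log (Real.sqrt c) = Real.log c / 2 := Real.log_sqrt hc0.le
        have hmon : Real.log (Real.sqrt c) ≤ Real.log (f N ω) :=
          Real.log_le_log hs0 hωB
        have hfω : 0 ≤ f N ω := hfnn N ω
        simp only [hgdef]
        nlinarith [hmon, hfω, hlog2]
      have h4nonneg : 0 ≤ᵐ[P.restrict (B c)] fun ω => 2 * g ω := by
        refine (ae_restrict_iff' (hmeasB c)).2 (Eventually.of_forall fun ω hω => ?_)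
        show (0:ℝ) ≤ 2 * g ω
        have h1f : 1 ≤ f N ω := le_trans hs1.le hω
        have : 0 ≤ Real.log (f N ω) := Real.log_nonneg h1f
        have : 0 ≤ g ω := mul_nonneg (hfnn N ω) this
        linarith
      have h4b : ∫ ω in S c ∩ B c, 2 * g ω ∂P ≤ ∫ ω in B c, 2 * g ω ∂P :=
        setIntegral_mono_set (hgint.const_mul 2).integrableOn h4nonneg
          (HasSubset.Subset.eventuallyLE Set.inter_subset_right)
      calc Real.log c * ∫ ω in S c ∩ B c, f N ω ∂P
          = ∫ ω in S c ∩ B c, Real.log c * f N ω ∂P := (integral_const_mul _ _).symm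
        _ ≤ ∫ ω in S c ∩ B c, 2 * g ω ∂P := h4a
        _ ≤ ∫ ω in B c, 2 * g ω ∂P := h4b
        _ = 2 * ∫ ω in B c, g ω ∂P := integral_const_mul _ _
    -- assemble
    have h5 : c * p ≤ K := le_trans h1 h2
    have h6 : Real.log c * (c * p) ≤ Real.log c * ∫ ω in S c, f N ω ∂P :=
      mul_le_mul_of_nonneg_left h1 hlogc
    have h7 : Real.log c * ∫ ω in S c \ B c, f N ω ∂P
        ≤ Real.log c * (Real.sqrt c * p) := mul_le_mul_of_nonneg_left h3 hlogc
    have h8 : Real.log c * (Real.sqrt c * p) ≤ Real.log c / Real.sqrt c * K := by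
      rw [div_mul_eq_mul_div, le_div_iff₀ hs0]
      calc Real.log c * (Real.sqrt c * p) * Real.sqrt c
          = Real.log c * (Real.sqrt c * Real.sqrt c * p) := by ring
        _ = Real.log c * (c * p) := by rw [hcs]
        _ ≤ Real.log c * K := mul_le_mul_of_nonneg_left h5 hlogc
    have h9 : Real.log c * ∫ ω in S c, f N ω ∂P
        = Real.log c * ∫ ω in S c ∩ B c, f N ω ∂P
          + Real.log c * ∫ ω in S c \ B c, f N ω ∂P := by
      rw [← hsplit]; ring
    have hsym : c * Real.log c * p = Real.log c * (c * p) := by ring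
    linarith [h4, h6, h7, h8, h9, hsym]
end
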